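/- Let H be the parity-check matrix of a proper array code with modulus q consisting of three block-rows, and let A be the 3q × mq matrix obtained by deleting some q − m block-columns from H. The shortened array code with parity-check matrix A has girth at least eight if and only if the set of labels of the block-columns retained in A is non-averaging over Z_q. -/

import Mathlib

/-- The Tanner graph of a (possibly shortened) array code with modulus `q`,
block-row labels `a 0, …, a (r-1)` (elements of `ZMod q`), and retained
block-column label set `S ⊆ ZMod q`.  Row vertices are pairs `(i, x)`
(block-row `i`, row `x` within the block); column vertices are pairs `(j, y)`
with `j ∈ S` (block-column labeled `j`, column `y` within the block).
A row `(i, x)` is adjacent to a column `(j, y)` iff the corresponding entry of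
the parity-check matrix, i.e. entry `(x, y)` of `P ^ (a i * j)`, equals `1`,
which happens iff `y = x + a i * j`. -/
def tannerGraph (q r : ℕ) (a : Fin r → ZMod q) (S : Finset (ZMod q)) :
    SimpleGraph ((Fin r × ZMod q) ⊕ ({j // j ∈ S} × ZMod q)) where
  Adj u v :=
    match u, v with
    | Sum.inl (i, x), Sum.inr (j, y) => y = x + a i * (j : ZMod q)
    | Sum.inr (j, y), Sum.inl (i, x) => y = x + a i * (j : ZMod q)
    | _, _ => False
  symm := by
    constructor
    rintro (⟨i, x⟩ | ⟨j, y⟩) (⟨i', x'⟩ | ⟨j', y'⟩) h <;> simp_all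
  loopless := by
    constructor
    rintro (⟨i, x⟩ | ⟨j, y⟩) h <;> simp_all

/-- A set `S ⊆ ZMod q` is `c`-non-averaging over `Z_q` if `x + c·y ≡ (c+1)·z (mod q)`
with `x, y, z ∈ S` implies `x = y = z`.  (`1`-non-averaging = non-averaging.) -/
def CNonAveraging {q : ℕ} (c : ℕ) (S : Finset (ZMod q)) : Prop :=
  ∀ x ∈ S, ∀ y ∈ S, ∀ z ∈ S, x + (c : ZMod q) * y = ((c : ZMod q) + 1) * z → x = z ∧ y = z

section Aux

variable {q r : ℕ} {a : Fin r → ZMod q} {S : Finset (ZMod q)}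

lemma tg_adj_lr {i : Fin r} {x : ZMod q} {j : {j // j ∈ S}} {y : ZMod q} :
    (tannerGraph q r a S).Adj (Sum.inl (i, x)) (Sum.inr (j, y)) ↔ y = x + a i * (j : ZMod q) :=
  Iff.rfl

lemma tg_adj_rl {i : Fin r} {x : ZMod q} {j : {j // j ∈ S}} {y : ZMod q} :
    (tannerGraph q r a S).Adj (Sum.inr (j, y)) (Sum.inl (i, x)) ↔ y = x + a i * (j : ZMod q) :=
  Iff.rfl

lemma tg_adj_ll {i i' : Fin r} {x x' : ZMod q} :
    ¬ (tannerGraph q r a S).Adj (Sum.inl (i, x)) (Sum.inl (i', x')) := fun h => h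

lemma tg_adj_rr {j j' : {j // j ∈ S}} {y y' : ZMod q} :
    ¬ (tannerGraph q r a S).Adj (Sum.inr (j, y)) (Sum.inr (j', y')) := fun h => h

/-- colors flip along edges -/
lemma tg_adj_isLeft {u v : (Fin r × ZMod q) ⊕ ({j // j ∈ S} × ZMod q)}
    (h : (tannerGraph q r a S).Adj u v) : u.isLeft = !v.isLeft := by
  rcases u with ⟨i, x⟩ | ⟨j, y⟩ <;> rcases v with ⟨i', x'⟩ | ⟨j', y'⟩ <;> simp_all
  · exact tg_adj_ll h
  · exact tg_adj_rr h

/-- parity of walks in a bipartite graph -/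
lemma tg_walk_parity : ∀ {u v : (Fin r × ZMod q) ⊕ ({j // j ∈ S} × ZMod q)}
    (p : (tannerGraph q r a S).Walk u v), Even p.length ↔ u.isLeft = v.isLeft := by
  intro u v p
  induction p with
  | nil => simp
  | @cons u b v h p ih =>
    rw [SimpleGraph.Walk.length_cons, Nat.even_add_one, ih, tg_adj_isLeft h]
    cases b.isLeft <;> cases v.isLeft <;> simp

/-- even length of cycles -/
lemma tg_cycle_even {v : (Fin r × ZMod q) ⊕ ({j // j ∈ S} × ZMod q)}
    (w : (tannerGraph q r a S).Walk v v) : Even w.length :=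
  (tg_walk_parity w).2 rfl

end Aux

/-- destructure a walk of length 4 -/
lemma walk_len4 {V : Type*} {G : SimpleGraph V} {v : V} (w : G.Walk v v) (hl : w.length = 4) :
    ∃ b1 b2 b3, G.Adj v b1 ∧ G.Adj b1 b2 ∧ G.Adj b2 b3 ∧ G.Adj b3 v ∧
      w.support = [v, b1, b2, b3, v] := by
  cases w with
  | nil => simp at hl
  | cons h1 p =>
    cases p with
    | nil => simp at hl
    | cons h2 p =>
      cases p with
      | nil => simp at hl
      | cons h3 p =>
        cases p with
        | nil => simp at hl
        | cons h4 p =>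
          cases p with
          | nil => exact ⟨_, _, _, h1, h2, h3, h4, by simp⟩
          | cons h5 p => simp [SimpleGraph.Walk.length_cons] at hl

/-- destructure a walk of length 6 -/
lemma walk_len6 {V : Type*} {G : SimpleGraph V} {v : V} (w : G.Walk v v) (hl : w.length = 6) :
    ∃ b1 b2 b3 b4 b5, G.Adj v b1 ∧ G.Adj b1 b2 ∧ G.Adj b2 b3 ∧ G.Adj b3 b4 ∧ G.Adj b4 b5 ∧
      G.Adj b5 v ∧ w.support = [v, b1, b2, b3, b4, b5, v] := by
  cases w with
  | nil => simp at hl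
  | cons h1 p =>
    cases p with
    | nil => simp at hl
    | cons h2 p =>
      cases p with
      | nil => simp at hl
      | cons h3 p =>
        cases p with
        | nil => simp at hl
        | cons h4 p =>
          cases p with
          | nil => simp at hl
          | cons h5 p =>
            cases p with
            | nil => simp at hl
            | cons h6 p =>
              cases p with
              | nil => exact ⟨_, _, _, _, _, h1, h2, h3, h4, h5, h6, by simp⟩
              | cons h7 p => simp [SimpleGraph.Walk.length_cons] at hl

/-- key algebraic lemma -/
lemma key_alg {q : ℕ} (hq : q.Prime) (a : Fin 3 → ZMod q) (a₀ d : ZMod q) (hd : d ≠ 0)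
    (hAP : ∀ i : Fin 3, a i = a₀ + (i : ℕ) * d) {S : Finset (ZMod q)}
    (hna : CNonAveraging 1 S)
    (i1 i2 i3 : Fin 3) (h12 : i1 ≠ i2) (h23 : i2 ≠ i3) (h31 : i3 ≠ i1)
    (j1 j2 j3 : ZMod q) (hj1 : j1 ∈ S) (hj2 : j2 ∈ S) (hj3 : j3 ∈ S)
    (k12 : j1 ≠ j2) (k23 : j2 ≠ j3) (k31 : j3 ≠ j1)
    (E : a i2 * (j1 - j2) + a i3 * (j2 - j3) + a i1 * (j3 - j1) = 0) : False := by
  haveI := Fact.mk hq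
  rw [hAP i1, hAP i2, hAP i3] at E
  have F : d * (((i2 : ℕ) : ZMod q) * (j1 - j2) + ((i3 : ℕ) : ZMod q) * (j2 - j3)
      + ((i1 : ℕ) : ZMod q) * (j3 - j1)) = 0 := by ring_nf; ring_nf at E; linear_combination E
  have F2 := (mul_eq_zero.mp F).resolve_left hd
  fin_cases i1 <;> fin_cases i2 <;> fin_cases i3 <;>
    first
      | exact h12 rfl
      | exact h23 rfl
      | exact h31 rfl
      | exact k31 (hna j1 hj1 j2 hj2 j3 hj3 (by push_cast at F2 ⊢; first | linear_combination F2 | linear_combination -F2)).1.symm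
      | exact k12 (hna j2 hj2 j3 hj3 j1 hj1 (by push_cast at F2 ⊢; first | linear_combination F2 | linear_combination -F2)).1.symm
      | exact k12 (hna j1 hj1 j3 hj3 j2 hj2 (by push_cast at F2 ⊢; first | linear_combination F2 | linear_combination -F2)).1

/-- Let `H` be the parity-check matrix of a proper array code with
modulus `q` (an odd prime) consisting of three block-rows (labels in arithmetic
progression with common difference `d ≢ 0`, distinct), and let `A` be obtained
from `H` by deleting all block-columns whose labels are outside `S`.  The
shortened array code with parity-check matrix `A` has girth at least eight iff
`S` is non-averaging over `Z_q`. -/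
theorem pac_r3_girth_eight_iff_nonaveraging (q : ℕ) (hq : q.Prime) (hqodd : Odd q)
    (a : Fin 3 → ZMod q) (a₀ d : ZMod q) (hd : d ≠ 0)
    (hAP : ∀ i : Fin 3, a i = a₀ + (i : ℕ) * d) (ha : Function.Injective a)
    (S : Finset (ZMod q)) :
    8 ≤ (tannerGraph q 3 a S).egirth ↔ CNonAveraging 1 S := by
  haveI := Fact.mk hq
  constructor
  · -- girth ≥ 8 → non-averaging
    intro h8 x hx y hy z hz hxyz
    by_contra hcon
    have hq2 : q ≠ 2 := by
      rintro rfl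
      simp [Nat.odd_iff] at hqodd
    have h2 : (2 : ZMod q) ≠ 0 := by
      intro h
      have h' : ((2 : ℕ) : ZMod q) = 0 := by exact_mod_cast h
      have hdvd : q ∣ 2 := (ZMod.natCast_eq_zero_iff 2 q).1 h'
      exact hq2 ((Nat.prime_dvd_prime_iff_eq hq Nat.prime_two).1 hdvd)
    have hxyz' : x + y = 2 * z := by push_cast at hxyz; linear_combination hxyz
    have hxz : x ≠ z := by
      rintro rfl
      exact hcon ⟨rfl, by linear_combination hxyz'⟩
    have hyz : y ≠ z := by
      rintro rfl
      exact hcon ⟨by linear_combination hxyz', rfl⟩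
    have hxy : x ≠ y := by
      rintro rfl
      exact hxz (mul_left_cancel₀ h2 (by linear_combination hxyz'))
    have e0 : a 0 = a₀ := by rw [hAP]; norm_num
    have e1 : a 1 = a₀ + d := by rw [hAP]; norm_num
    have e2 : a 2 = a₀ + 2 * d := by rw [hAP]; norm_num
    have h1 : (tannerGraph q 3 a S).Adj (Sum.inl (0, 0)) (Sum.inr (⟨x, hx⟩, a 0 * x)) := by
      rw [tg_adj_lr]; ring
    have h2' : (tannerGraph q 3 a S).Adj (Sum.inr (⟨x, hx⟩, a 0 * x))
        (Sum.inl (1, a 0 * x - a 1 * x)) := by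
      rw [tg_adj_rl]; ring
    have h3 : (tannerGraph q 3 a S).Adj (Sum.inl (1, a 0 * x - a 1 * x))
        (Sum.inr (⟨y, hy⟩, a 0 * x - a 1 * x + a 1 * y)) := by
      rw [tg_adj_lr]
    have h4 : (tannerGraph q 3 a S).Adj (Sum.inr (⟨y, hy⟩, a 0 * x - a 1 * x + a 1 * y))
        (Sum.inl (2, a 0 * x - a 1 * x + a 1 * y - a 2 * y)) := by
      rw [tg_adj_rl]; ring
    have h5 : (tannerGraph q 3 a S).Adj (Sum.inl (2, a 0 * x - a 1 * x + a 1 * y - a 2 * y))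
        (Sum.inr (⟨z, hz⟩, a 0 * x - a 1 * x + a 1 * y - a 2 * y + a 2 * z)) := by
      rw [tg_adj_lr]
    have h6 : (tannerGraph q 3 a S).Adj
        (Sum.inr (⟨z, hz⟩, a 0 * x - a 1 * x + a 1 * y - a 2 * y + a 2 * z))
        (Sum.inl (0, 0)) := by
      rw [tg_adj_rl, e0, e1, e2]
      first
        | linear_combination d * hxyz'
        | linear_combination -(d * hxyz')
    set w : (tannerGraph q 3 a S).Walk (Sum.inl (0, 0)) (Sum.inl (0, 0)) :=
      SimpleGraph.Walk.cons h1 (SimpleGraph.Walk.cons h2' (SimpleGraph.Walk.cons h3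
        (SimpleGraph.Walk.cons h4 (SimpleGraph.Walk.cons h5
          (SimpleGraph.Walk.cons h6 SimpleGraph.Walk.nil))))) with hw
    have f01 : (0 : Fin 3) ≠ 1 := by decide
    have f02 : (0 : Fin 3) ≠ 2 := by decide
    have f12 : (1 : Fin 3) ≠ 2 := by decide
    have hcyc : w.IsCycle := by
      rw [SimpleGraph.Walk.isCycle_def]
      refine ⟨?_, by simp [hw], ?_⟩
      · rw [SimpleGraph.Walk.isTrail_def, hw]
        simp [List.nodup_cons, Sym2.eq_iff, Prod.ext_iff, Subtype.ext_iff,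
          hxy, hyz, hxz, f01, f02, f12, hxy.symm, hyz.symm, hxz.symm, f01.symm, f02.symm, f12.symm]
      · rw [hw]
        simp [List.nodup_cons, Prod.ext_iff, Subtype.ext_iff,
          hxy, hyz, hxz, f01, f02, f12, hxy.symm, hyz.symm, hxz.symm, f01.symm, f02.symm, f12.symm]
    have hle := SimpleGraph.le_egirth.mp h8 _ w hcyc
    rw [show w.length = 6 by simp [hw]] at hle
    norm_num at hle
  · -- non-averaging → girth ≥ 8
    intro hna
    rw [SimpleGraph.le_egirth]
    intro v w hw
    by_contra hlen
    have hlt : w.length < 8 := by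
      push_neg at hlen
      exact_mod_cast hlen
    have hev := tg_cycle_even w
    have h3 := hw.three_le_length
    have : w.length = 4 ∨ w.length = 6 := by
      obtain ⟨k, hk⟩ := hev; omega
    rcases this with hl | hl
    · -- no 4-cycles
      obtain ⟨b1, b2, b3, h1, h2, h3, h4, hsup⟩ := walk_len4 w hl
      have hnd := hw.support_nodup
      rw [hsup] at hnd
      simp only [List.tail_cons, List.nodup_cons, List.mem_cons, List.mem_singleton, List.not_mem_nil,
        List.nodup_nil, not_or] at hnd
      obtain ⟨⟨n12, n13, n1v, -⟩, ⟨n23, n2v, -⟩, ⟨n3v, -⟩, -⟩ := hnd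
      rcases v with ⟨i1, x1⟩ | ⟨j1, y1⟩
      · rcases b1 with ⟨i, x⟩ | ⟨j1, y1⟩
        · exact tg_adj_ll h1
        rcases b2 with ⟨i2, x2⟩ | ⟨j, y⟩
        swap; · exact tg_adj_rr h2
        rcases b3 with ⟨i, x⟩ | ⟨j2, y2⟩
        · exact tg_adj_ll h3.symm
        have e1 : y1 = x1 + a i1 * (j1 : ZMod q) := h1
        have e2 : y1 = x2 + a i2 * (j1 : ZMod q) := h2
        have e3 : y2 = x2 + a i2 * (j2 : ZMod q) := h3
        have e4 : y2 = x1 + a i1 * (j2 : ZMod q) := h4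
        have key : (a i1 - a i2) * ((j1 : ZMod q) - (j2 : ZMod q)) = 0 := by
          linear_combination e2 - e1 + e4 - e3
        rcases mul_eq_zero.mp key with h | h
        · have : i1 = i2 := ha (by linear_combination h)
          subst this
          exact n2v (by rw [show x2 = x1 by linear_combination e1 - e2])
        · have : j1 = j2 := Subtype.ext (by linear_combination h)
          subst this
          exact n13 (by rw [show y1 = y2 by linear_combination e1 - e4])
      · rcases b1 with ⟨i1, x1⟩ | ⟨j, y⟩
        swap; · exact tg_adj_rr h1
        rcases b2 with ⟨i, x⟩ | ⟨j2, y2⟩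
        · exact tg_adj_ll h2
        rcases b3 with ⟨i2, x2⟩ | ⟨j, y⟩
        swap; · exact tg_adj_rr h3
        have e1 : y1 = x1 + a i1 * (j1 : ZMod q) := h1
        have e2 : y2 = x1 + a i1 * (j2 : ZMod q) := h2
        have e3 : y2 = x2 + a i2 * (j2 : ZMod q) := h3
        have e4 : y1 = x2 + a i2 * (j1 : ZMod q) := h4
        have key : (a i1 - a i2) * ((j1 : ZMod q) - (j2 : ZMod q)) = 0 := by
          linear_combination e4 - e1 + e2 - e3
        rcases mul_eq_zero.mp key with h | h
        · have : i1 = i2 := ha (by linear_combination h)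
          subst this
          exact n13 (by rw [show x1 = x2 by linear_combination e4 - e1])
        · have : j1 = j2 := Subtype.ext (by linear_combination h)
          subst this
          exact n2v (by rw [show y2 = y1 by linear_combination e2 - e1])
    · -- no 6-cycles
      obtain ⟨b1, b2, b3, b4, b5, h1, h2, h3, h4, h5, h6, hsup⟩ := walk_len6 w hl
      have hnd := hw.support_nodup
      rw [hsup] at hnd
      simp only [List.tail_cons, List.nodup_cons, List.mem_cons, List.mem_singleton, List.not_mem_nil,
        List.nodup_nil, not_or] at hnd
      obtain ⟨⟨n12, n13, n14, n15, n1v, -⟩, ⟨n23, n24, n25, n2v, -⟩, ⟨n34, n35, n3v, -⟩,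
        ⟨n45, n4v, -⟩, ⟨n5v, -⟩, -⟩ := hnd
      rcases v with ⟨i1, x1⟩ | ⟨j1, y1⟩
      · rcases b1 with ⟨i, x⟩ | ⟨j1, y1⟩
        · exact tg_adj_ll h1
        rcases b2 with ⟨i2, x2⟩ | ⟨j, y⟩
        swap; · exact tg_adj_rr h2
        rcases b3 with ⟨i, x⟩ | ⟨j2, y2⟩
        · exact tg_adj_ll h3.symm
        rcases b4 with ⟨i3, x3⟩ | ⟨j, y⟩
        swap; · exact tg_adj_rr h4
        rcases b5 with ⟨i, x⟩ | ⟨j3, y3⟩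
        · exact tg_adj_ll h5.symm
        have e1 : y1 = x1 + a i1 * (j1 : ZMod q) := h1
        have e2 : y1 = x2 + a i2 * (j1 : ZMod q) := h2
        have e3 : y2 = x2 + a i2 * (j2 : ZMod q) := h3
        have e4 : y2 = x3 + a i3 * (j2 : ZMod q) := h4
        have e5 : y3 = x3 + a i3 * (j3 : ZMod q) := h5
        have e6 : y3 = x1 + a i1 * (j3 : ZMod q) := h6
        have hi12 : i1 ≠ i2 := by
          rintro rfl
          exact n2v (by rw [show x2 = x1 by linear_combination e1 - e2])
        have hi23 : i2 ≠ i3 := by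
          rintro rfl
          exact n24 (by rw [show x2 = x3 by linear_combination e4 - e3])
        have hi31 : i3 ≠ i1 := by
          rintro rfl
          exact n4v (by rw [show x3 = x1 by linear_combination e6 - e5])
        have hj12 : (j1 : ZMod q) ≠ (j2 : ZMod q) := by
          intro hj
          exact n13 (by rw [Subtype.ext hj, show y1 = y2 by linear_combination e2 - e3 + a i2 * hj])
        have hj23 : (j2 : ZMod q) ≠ (j3 : ZMod q) := by
          intro hj
          exact n35 (by rw [Subtype.ext hj, show y2 = y3 by linear_combination e4 - e5 + a i3 * hj])
        have hj31 : (j3 : ZMod q) ≠ (j1 : ZMod q) := by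
          intro hj
          exact n15 (by rw [Subtype.ext hj.symm,
            show y1 = y3 by linear_combination e1 - e6 - a i1 * hj])
        exact key_alg hq a a₀ d hd hAP hna i1 i2 i3 hi12 hi23 hi31 _ _ _ j1.2 j2.2 j3.2
          hj12 hj23 hj31 (by linear_combination e3 - e2 + e5 - e4 + e1 - e6)
      · rcases b1 with ⟨i1, x1⟩ | ⟨j, y⟩
        swap; · exact tg_adj_rr h1
        rcases b2 with ⟨i, x⟩ | ⟨j2, y2⟩
        · exact tg_adj_ll h2
        rcases b3 with ⟨i2, x2⟩ | ⟨j, y⟩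
        swap; · exact tg_adj_rr h3
        rcases b4 with ⟨i, x⟩ | ⟨j3, y3⟩
        · exact tg_adj_ll h4
        rcases b5 with ⟨i3, x3⟩ | ⟨j, y⟩
        swap; · exact tg_adj_rr h5
        have e1 : y1 = x1 + a i1 * (j1 : ZMod q) := h1
        have e2 : y2 = x1 + a i1 * (j2 : ZMod q) := h2
        have e3 : y2 = x2 + a i2 * (j2 : ZMod q) := h3
        have e4 : y3 = x2 + a i2 * (j3 : ZMod q) := h4
        have e5 : y3 = x3 + a i3 * (j3 : ZMod q) := h5
        have e6 : y1 = x3 + a i3 * (j1 : ZMod q) := h6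
        have hi12 : i1 ≠ i2 := by
          rintro rfl
          exact n13 (by rw [show x1 = x2 by linear_combination e3 - e2])
        have hi23 : i2 ≠ i3 := by
          rintro rfl
          exact n35 (by rw [show x2 = x3 by linear_combination e5 - e4])
        have hi31 : i3 ≠ i1 := by
          rintro rfl
          exact n15 (by rw [show x1 = x3 by linear_combination e6 - e1])
        have hj12 : (j1 : ZMod q) ≠ (j2 : ZMod q) := by
          intro hj
          exact n2v (by rw [Subtype.ext hj.symm,
            show y2 = y1 by linear_combination e2 - e1 + a i1 * hj.symm])
        have hj23 : (j2 : ZMod q) ≠ (j3 : ZMod q) := by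
          intro hj
          exact n24 (by rw [Subtype.ext hj, show y2 = y3 by linear_combination e3 - e4 + a i2 * hj])
        have hj31 : (j3 : ZMod q) ≠ (j1 : ZMod q) := by
          intro hj
          exact n4v (by rw [Subtype.ext hj, show y3 = y1 by linear_combination e5 - e6 + a i3 * hj])
        exact key_alg hq a a₀ d hd hAP hna i3 i1 i2 hi31 hi12 hi23 _ _ _ j1.2 j2.2 j3.2
          hj12 hj23 hj31 (by linear_combination e2 - e1 + e4 - e3 + e6 - e5)
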